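/- For every n ≥ 2, if M is a countable subset of L that is dense in L with its Euclidean subspace topology, then the space (X, τ(L \ M)) is second-countable but not σ-compact. -/
import Mathlib


open Metric Set TopologicalSpace

noncomputable section

/-- The last coordinate `x (n-1)` of a point of `EuclideanSpace ℝ (Fin n)`
(junk value `0` if `n = 0`). -/
def lastCoord (n : ℕ) (x : EuclideanSpace ℝ (Fin n)) : ℝ :=
  if h : 0 < n then x ⟨n - 1, Nat.sub_lt h one_pos⟩ else 0

/-- The closed upper half-space `X = {x : x (n-1) ≥ 0}`. -/
def HalfSpace (n : ℕ) : Set (EuclideanSpace ℝ (Fin n)) := {x | 0 ≤ lastCoord n x}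

/-- The open upper half-space `P = {x : x (n-1) > 0}`. -/
def OpenHalf (n : ℕ) : Set (EuclideanSpace ℝ (Fin n)) := {x | 0 < lastCoord n x}

/-- The boundary hyperplane `L = {x : x (n-1) = 0}`. -/
def Bdry (n : ℕ) : Set (EuclideanSpace ℝ (Fin n)) := {x | lastCoord n x = 0}

/-- The `n`-th standard basis vector `e` (junk value `0` if `n = 0`). -/
def eVec (n : ℕ) : EuclideanSpace ℝ (Fin n) :=
  if h : 0 < n then EuclideanSpace.single ⟨n - 1, Nat.sub_lt h one_pos⟩ (1 : ℝ) else 0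

/-- The tangent ball `B̃(a, ε) = {a} ∪ B(a + ε • e, ε)`. -/
def tangentBall (n : ℕ) (a : EuclideanSpace ℝ (Fin n)) (ε : ℝ) :
    Set (EuclideanSpace ℝ (Fin n)) :=
  {a} ∪ ball (a + ε • eVec n) ε

/-- The generating family for the topology `τ(A)` on `X`:
balls `B(a,ε)` with `a ∈ P`, `0 < ε < a (n-1)`; traces `B(a,ε) ∩ X` with `a ∈ A`, `ε > 0`;
and tangent balls `B̃(a,ε)` with `a ∈ L \ A`, `ε > 0`. -/
def niemGen (n : ℕ) (A : Set (EuclideanSpace ℝ (Fin n))) : Set (Set (HalfSpace n)) :=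
  {s | ∃ a ∈ OpenHalf n, ∃ ε, 0 < ε ∧ ε < lastCoord n a ∧
      s = Subtype.val ⁻¹' ball a ε} ∪
  {s | ∃ a ∈ A, ∃ ε, 0 < ε ∧ s = Subtype.val ⁻¹' ball a ε} ∪
  {s | ∃ a ∈ Bdry n \ A, ∃ ε, 0 < ε ∧ s = Subtype.val ⁻¹' tangentBall n a ε}

/-- The topology `τ(A)` on `X`; `τ(∅)` is the Niemytzki topology `τ_N`. -/
def tau (n : ℕ) (A : Set (EuclideanSpace ℝ (Fin n))) : TopologicalSpace (HalfSpace n) :=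
  generateFrom (niemGen n A)

/-- The inclusion of `L` into `X`. -/
def inclLX (n : ℕ) (x : Bdry n) : HalfSpace n := ⟨x.1, le_of_eq x.2.symm⟩

/-- The subspace topology `τ(A)|_L` on `L` induced from `(X, τ(A))`. -/
def tauL (n : ℕ) (A : Set (EuclideanSpace ℝ (Fin n))) : TopologicalSpace (Bdry n) :=
  TopologicalSpace.induced (inclLX n) (tau n A)

/-- A space is perfect if every closed set is a `Gδ`-set. -/
def IsPerfectSpace (X : Type*) [TopologicalSpace X] : Prop :=
  ∀ s : Set X, IsClosed s → IsGδ s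

/-- An `Fσ`-set: a countable union of closed sets. -/
def IsFsigma {X : Type*} [TopologicalSpace X] (s : Set X) : Prop :=
  ∃ F : ℕ → Set X, (∀ i, IsClosed (F i)) ∧ s = ⋃ i, F i

/-- Countably paracompact: every countable open cover admits a locally finite open refinement. -/
def CountablyParacompact (X : Type*) [TopologicalSpace X] : Prop :=
  ∀ u : ℕ → Set X, (∀ i, IsOpen (u i)) → (⋃ i, u i) = Set.univ →
    ∃ (ι : Type) (v : ι → Set X), (∀ j, IsOpen (v j)) ∧ (⋃ j, v j) = Set.univ ∧
      LocallyFinite v ∧ ∀ j, ∃ i, v j ⊆ u i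

/-- A zero set: the zero locus of a continuous real-valued function. -/
def IsZeroSet {X : Type*} [TopologicalSpace X] (s : Set X) : Prop :=
  ∃ f : X → ℝ, Continuous f ∧ s = f ⁻¹' {0}

/-- `Y` is z-embedded in `X` if every zero set of the subspace `Y`
is the trace on `Y` of a zero set of `X`. -/
def ZEmbedded {X : Type*} [TopologicalSpace X] (Y : Set X) : Prop :=
  ∀ s : Set Y, IsZeroSet s → ∃ Z : Set X, IsZeroSet Z ∧ s = Subtype.val ⁻¹' Z

/-- `Y` is `C*`-embedded in `X` if every bounded continuous real-valued function on the
subspace `Y` extends to a bounded continuous function on `X`. -/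
def CStarEmbedded {X : Type*} [TopologicalSpace X] (Y : Set X) : Prop :=
  ∀ f : Y → ℝ, Continuous f → (∃ M, ∀ y, |f y| ≤ M) →
    ∃ g : X → ℝ, Continuous g ∧ (∃ M, ∀ x, |g x| ≤ M) ∧ ∀ y : Y, g ↑y = f y
end
section Aux

open Filter TopologicalSpace Topology

variable {n : ℕ}

local notation "E" => EuclideanSpace ℝ (Fin n)

lemma coord_dist_le (x y : E) (i : Fin n) : dist (x i) (y i) ≤ dist x y := by
  rw [EuclideanSpace.dist_eq]
  have h1 : dist (x i) (y i) ^ 2 ≤ ∑ j, dist (x j) (y j) ^ 2 :=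
    Finset.single_le_sum (f := fun j => dist (x j) (y j) ^ 2) (fun j _ => sq_nonneg _) (Finset.mem_univ i)
  calc dist (x i) (y i) = Real.sqrt (dist (x i) (y i) ^ 2) := (Real.sqrt_sq dist_nonneg).symm
    _ ≤ _ := Real.sqrt_le_sqrt h1

lemma lastCoord_eq (h : 0 < n) (x : E) :
    lastCoord n x = x ⟨n - 1, Nat.sub_lt h one_pos⟩ := dif_pos h

lemma eVec_eq (h : 0 < n) :
    eVec n = EuclideanSpace.single ⟨n - 1, Nat.sub_lt h one_pos⟩ (1 : ℝ) := dif_pos h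

lemma lastCoord_dist (h : 0 < n) (x y : E) :
    dist (lastCoord n x) (lastCoord n y) ≤ dist x y := by
  rw [lastCoord_eq h, lastCoord_eq h]; exact coord_dist_le x y _

lemma lastCoord_continuous (h : 0 < n) : Continuous (lastCoord n) := by
  refine (LipschitzWith.of_dist_le_mul (K := 1) (fun x y => ?_)).continuous
  simpa using lastCoord_dist h x y

lemma lastCoord_add_smul (h : 0 < n) (a : E) (ε : ℝ) :
    lastCoord n (a + ε • eVec n) = lastCoord n a + ε := by
  rw [lastCoord_eq h, lastCoord_eq h, eVec_eq h, PiLp.add_apply, PiLp.smul_apply,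
    EuclideanSpace.single_apply, if_pos rfl]
  simp

lemma dist_add_smul_smul (h : 0 < n) (a : E) (δ ε : ℝ) :
    dist (a + δ • eVec n) (a + ε • eVec n) = |δ - ε| := by
  rw [dist_eq_norm, add_sub_add_left_eq_sub, ← sub_smul, norm_smul, eVec_eq h,
    EuclideanSpace.norm_single, norm_one, mul_one, Real.norm_eq_abs]

lemma dist_add_smul_self (h : 0 < n) (a : E) (ε : ℝ) :
    dist (a + ε • eVec n) a = |ε| := by
  have := dist_add_smul_smul h a ε 0
  simpa using this

lemma lastCoord_pos_of_mem_ball (h : 0 < n) {a y : E} {ε : ℝ}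
    (ha : lastCoord n a = 0) (hy : y ∈ Metric.ball (a + ε • eVec n) ε) :
    0 < lastCoord n y := by
  rw [Metric.mem_ball] at hy
  have h1 : dist (lastCoord n y) (lastCoord n (a + ε • eVec n)) ≤ dist y (a + ε • eVec n) :=
    lastCoord_dist h _ _
  rw [lastCoord_add_smul h, ha, zero_add, Real.dist_eq] at h1
  have := abs_lt.1 (lt_of_le_of_lt h1 hy)
  linarith [this.1]

lemma tangentBall_subset_ball (h : 0 < n) {a : E} {ε r : ℝ} (hε : 0 < ε) (hr : 2 * ε ≤ r) :
    tangentBall n a ε ⊆ Metric.ball a r := by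
  rintro y (rfl | hy)
  · simpa using lt_of_lt_of_le (by linarith : (0:ℝ) < r) le_rfl
  · rw [Metric.mem_ball] at hy ⊢
    calc dist y a ≤ dist y (a + ε • eVec n) + dist (a + ε • eVec n) a := dist_triangle _ _ _
      _ < ε + |ε| := by rw [dist_add_smul_self h]; linarith
      _ ≤ r := by rw [abs_of_pos hε]; linarith

lemma tangentBall_mono (h : 0 < n) {a : E} {δ ε : ℝ} (h0 : 0 < δ) (hδε : δ ≤ ε) :
    tangentBall n a δ ⊆ tangentBall n a ε := by
  rintro y (rfl | hy)
  · exact Or.inl rfl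
  · refine Or.inr ?_
    rw [Metric.mem_ball] at hy ⊢
    calc dist y (a + ε • eVec n) ≤ dist y (a + δ • eVec n) + dist (a + δ • eVec n) (a + ε • eVec n) :=
        dist_triangle _ _ _
      _ = dist y (a + δ • eVec n) + |δ - ε| := by rw [dist_add_smul_smul h]
      _ < δ + (ε - δ) := by rw [abs_of_nonpos (by linarith)]; linarith
      _ = ε := by ring

lemma isOpen_tau_of_mem {A : Set E} {s : Set (HalfSpace n)} (hs : s ∈ niemGen n A) :
    IsOpen[tau n A] s :=
  TopologicalSpace.isOpen_generateFrom_of_mem hs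

lemma isOpen_of_forall_basic {α : Type*} {t : TopologicalSpace α} {s : Set α}
    (h : ∀ x ∈ s, ∃ u, IsOpen[t] u ∧ x ∈ u ∧ u ⊆ s) : IsOpen[t] s := by
  letI := t
  rw [isOpen_iff_forall_mem_open]
  intro x hx
  obtain ⟨u, h1, h2, h3⟩ := h x hx
  exact ⟨u, h3, h1, h2⟩

/-- Euclidean traces are open in any `tau n (Bdry n \ M)`. -/
lemma trace_isOpen_tau (h : 0 < n) (M : Set E) {U : Set E} (hU : IsOpen U) :
    IsOpen[tau n (Bdry n \ M)] (Subtype.val ⁻¹' U : Set (HalfSpace n)) := by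
  refine isOpen_of_forall_basic fun x hx => ?_
  obtain ⟨r, hr, hball⟩ := Metric.isOpen_iff.1 hU x.1 hx
  have hx2 : 0 ≤ lastCoord n x.1 := x.2
  rcases hx2.lt_or_eq with hpos | hzero
  · -- interior point
    set ε := min r (lastCoord n x.1) / 2 with hε
    have hε0 : 0 < ε := by positivity
    refine ⟨Subtype.val ⁻¹' Metric.ball x.1 ε, ?_, ?_, ?_⟩
    · refine isOpen_tau_of_mem (Or.inl (Or.inl ⟨x.1, hpos, ε, hε0, ?_, rfl⟩))
      calc ε < min r (lastCoord n x.1) := by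
              rw [hε]; exact half_lt_self (lt_min hr hpos)
        _ ≤ lastCoord n x.1 := min_le_right _ _
    · exact Metric.mem_ball_self hε0
    · refine Set.Subset.trans (Set.preimage_mono ?_) (Set.preimage_mono hball)
      exact Metric.ball_subset_ball ((half_le_self (lt_min hr hpos).le).trans (min_le_left r _))
  · by_cases hxM : x.1 ∈ M
    · -- tangent ball at a point of M
      refine ⟨Subtype.val ⁻¹' tangentBall n x.1 (r / 2), ?_, ?_, ?_⟩
      · refine isOpen_tau_of_mem (Or.inr ⟨x.1, ⟨hzero.symm, fun hc => hc.2 hxM⟩, r/2, by linarith, rfl⟩)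
      · exact Or.inl rfl
      · exact Set.Subset.trans
          (Set.preimage_mono (tangentBall_subset_ball h (by linarith) (by linarith)))
          (Set.preimage_mono hball)
    · -- Euclidean trace at a point of `Bdry \ M`
      refine ⟨Subtype.val ⁻¹' Metric.ball x.1 r, ?_, Metric.mem_ball_self hr, Set.preimage_mono hball⟩
      exact isOpen_tau_of_mem (Or.inl (Or.inr ⟨x.1, ⟨hzero.symm, hxM⟩, r, hr, rfl⟩))

lemma exists_rat_ball {D : Set E} (hD : Dense D) {c x : E} {r : ℝ}
    (hx : x ∈ Metric.ball c r) :
    ∃ d ∈ D, ∃ q : ℚ, 0 < (q : ℝ) ∧ x ∈ Metric.ball d (q : ℝ) ∧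
      Metric.ball d (q : ℝ) ⊆ Metric.ball c r := by
  rw [Metric.mem_ball] at hx
  set r' := (r - dist x c) / 3 with hr'
  have hr'0 : 0 < r' := by simp only [hr']; linarith
  obtain ⟨d, hdD, hdx⟩ := hD.exists_mem_open Metric.isOpen_ball ⟨x, Metric.mem_ball_self hr'0⟩
  rw [Metric.mem_ball] at hdx
  obtain ⟨q, hq1, hq2⟩ := exists_rat_btwn (show r' < 2 * r' by linarith)
  refine ⟨d, hdD, q, by linarith, ?_, ?_⟩
  · rw [Metric.mem_ball, dist_comm]; linarith
  · intro y hy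
    rw [Metric.mem_ball] at hy ⊢
    calc dist y c ≤ dist y d + dist d x + dist x c := dist_triangle4 _ _ _ _
      _ < (q : ℝ) + r' + dist x c := by linarith
      _ < 2 * r' + r' + dist x c := by linarith
      _ = r := by simp only [hr']; ring

end Aux


/-- For every `n ≥ 2`, second countable but not σ-compact. -/
theorem tauLM_secondCountable_not_sigmaCompact (n : ℕ) (hn : 2 ≤ n)
    (M : Set (EuclideanSpace ℝ (Fin n))) (hM : M ⊆ Bdry n) (hMc : M.Countable)
    (hMd : Dense (Subtype.val ⁻¹' M : Set (Bdry n))) :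
    @SecondCountableTopology (HalfSpace n) (tau n (Bdry n \ M)) ∧
    ¬ @SigmaCompactSpace (HalfSpace n) (tau n (Bdry n \ M)) := by
  have hpos : 0 < n := by omega
  constructor
  · -- Second countability
    obtain ⟨D, hDc, hDd⟩ := TopologicalSpace.exists_countable_dense (EuclideanSpace ℝ (Fin n))
    set S : Set (Set (HalfSpace n)) :=
      (fun p : EuclideanSpace ℝ (Fin n) × ℚ =>
        (Subtype.val ⁻¹' Metric.ball p.1 (p.2 : ℝ) : Set (HalfSpace n))) '' (D ×ˢ Set.univ) ∪
      (fun p : EuclideanSpace ℝ (Fin n) × ℕ =>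
        (Subtype.val ⁻¹' tangentBall n p.1 (1 / (p.2 + 1)) : Set (HalfSpace n))) ''
        (M ×ˢ Set.univ) with hS
    have hSc : S.Countable :=
      ((hDc.prod Set.countable_univ).image _).union ((hMc.prod Set.countable_univ).image _)
    have heq : tau n (Bdry n \ M) = generateFrom S := by
      refine le_antisymm (le_generateFrom ?_) ?_
      · -- every member of S is tau-open
        rintro s (⟨⟨d, q⟩, ⟨hdD, -⟩, rfl⟩ | ⟨⟨a, k⟩, ⟨haM, -⟩, rfl⟩)
        · exact trace_isOpen_tau hpos M Metric.isOpen_ball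
        · refine isOpen_tau_of_mem (Or.inr ⟨a, ⟨hM haM, fun hc => hc.2 haM⟩, 1 / (k + 1),
            by positivity, rfl⟩)
      · -- generateFrom S ≤ tau
        refine le_generateFrom ?_
        rintro s (( ⟨a, haP, ε, hε0, hεa, rfl⟩ | ⟨a, haA, ε, hε0, rfl⟩) | ⟨a, haT, ε, hε0, rfl⟩)
        · -- type 1: ball trace
          refine isOpen_of_forall_basic fun x hx => ?_
          obtain ⟨d, hdD, q, hq0, hxq, hsub⟩ := exists_rat_ball hDd hx
          exact ⟨Subtype.val ⁻¹' Metric.ball d (q : ℝ),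
            TopologicalSpace.isOpen_generateFrom_of_mem (Or.inl ⟨(d, q), ⟨hdD, trivial⟩, rfl⟩),
            hxq, Set.preimage_mono hsub⟩
        · -- type 2: same argument
          refine isOpen_of_forall_basic fun x hx => ?_
          obtain ⟨d, hdD, q, hq0, hxq, hsub⟩ := exists_rat_ball hDd hx
          exact ⟨Subtype.val ⁻¹' Metric.ball d (q : ℝ),
            TopologicalSpace.isOpen_generateFrom_of_mem (Or.inl ⟨(d, q), ⟨hdD, trivial⟩, rfl⟩),
            hxq, Set.preimage_mono hsub⟩
        · -- type 3: tangent ball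
          have haM : a ∈ M := by
            by_contra hc
            exact haT.2 ⟨haT.1, hc⟩
          refine isOpen_of_forall_basic fun x hx => ?_
          rcases hx with hxa | hxb
          · -- x = a : use a small tangent ball from S
            obtain ⟨k, hk⟩ := exists_nat_one_div_lt hε0
            refine ⟨Subtype.val ⁻¹' tangentBall n a (1 / (k + 1)),
              TopologicalSpace.isOpen_generateFrom_of_mem (Or.inr ⟨(a, k), ⟨haM, trivial⟩, rfl⟩),
              ?_, Set.preimage_mono (tangentBall_mono hpos (by positivity) hk.le)⟩
            exact Or.inl hxa
          · -- x in the open ball part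
            obtain ⟨d, hdD, q, hq0, hxq, hsub⟩ := exists_rat_ball hDd hxb
            exact ⟨Subtype.val ⁻¹' Metric.ball d (q : ℝ),
              TopologicalSpace.isOpen_generateFrom_of_mem (Or.inl ⟨(d, q), ⟨hdD, trivial⟩, rfl⟩),
              hxq, Set.preimage_mono (hsub.trans Set.subset_union_right)⟩
    exact @SecondCountableTopology.mk (HalfSpace n) (tau n (Bdry n \ M)) ⟨S, hSc, heq⟩
  · -- Not σ-compact
    intro hσ
    letI : TopologicalSpace (HalfSpace n) := tau n (Bdry n \ M)
    obtain ⟨K, hKc, hKu⟩ := hσ.isSigmaCompact_univ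
    have hval : Continuous (Subtype.val : HalfSpace n → EuclideanSpace ℝ (Fin n)) :=
      continuous_def.2 fun U hU => trace_isOpen_tau hpos M hU
    have hKcE : ∀ k, IsCompact (Subtype.val '' K k : Set (EuclideanSpace ℝ (Fin n))) :=
      fun k => (hKc k).image hval
    set F : ℕ → Set (Bdry n) := fun k => (fun y : Bdry n => (y : EuclideanSpace ℝ (Fin n))) ⁻¹'
      (Subtype.val '' K k) with hF
    have hFclosed : ∀ k, IsClosed (F k) :=
      fun k => ((hKcE k).isClosed).preimage continuous_subtype_val
    have hBd_closed : IsClosed (Bdry n) :=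
      isClosed_eq (lastCoord_continuous hpos) continuous_const
    haveI : CompleteSpace (Bdry n) := hBd_closed.completeSpace_coe
    haveI : Nonempty (Bdry n) := by
      refine ⟨⟨0, ?_⟩⟩
      show lastCoord n 0 = 0
      rw [lastCoord_eq hpos]
      rfl
    have hcover : ⋃ k, F k = Set.univ := by
      ext y
      simp only [Set.mem_iUnion, Set.mem_univ, iff_true]
      have hy : (⟨y.1, le_of_eq (y.2 : lastCoord n y.1 = 0).symm⟩ : HalfSpace n) ∈ ⋃ k, K k := by
        rw [hKu]; trivial
      obtain ⟨k, hk⟩ := Set.mem_iUnion.1 hy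
      exact ⟨k, ⟨_, hk, rfl⟩⟩
    obtain ⟨k0, y0, hy0⟩ := nonempty_interior_of_iUnion_of_closed hFclosed hcover
    obtain ⟨r, hr0, hball⟩ := Metric.mem_nhds_iff.1 (mem_interior_iff_mem_nhds.1 hy0)
    obtain ⟨a, haM, ha_ball⟩ := hMd.exists_mem_open Metric.isOpen_ball
      ⟨y0, Metric.mem_ball_self hr0⟩
    have ha_dist : dist a y0 < r := Metric.mem_ball.1 ha_ball
    set ρ := r - dist a y0 with hρ
    have hρ0 : 0 < ρ := by simp only [hρ]; linarith
    -- choose the approximating sequence in M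
    have key : ∀ m : ℕ, ∃ b : Bdry n, b ∈ (Subtype.val ⁻¹' M : Set (Bdry n)) ∧ b ≠ a ∧
        dist b a < min ρ (1 / (m + 1)) := by
      intro m
      set δ := min ρ (1 / (m + 1 : ℝ)) with hδ
      have hδ0 : 0 < δ := lt_min hρ0 (by positivity)
      have hWopen : IsOpen (Metric.ball a δ \ {a}) :=
        Metric.isOpen_ball.sdiff isClosed_singleton
      have hWne : (Metric.ball a δ \ {a}).Nonempty := by
        have h0n : (0 : ℕ) < n := hpos
        set i0 : Fin n := ⟨0, h0n⟩ with hi0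
        set c : EuclideanSpace ℝ (Fin n) :=
          (a : EuclideanSpace ℝ (Fin n)) + (δ / 2) • EuclideanSpace.single i0 (1 : ℝ) with hc
        have hcL : lastCoord n c = 0 := by
          have ha2 : lastCoord n (a : EuclideanSpace ℝ (Fin n)) = 0 := a.2
          rw [lastCoord_eq hpos] at ha2
          rw [hc, lastCoord_eq hpos, PiLp.add_apply, PiLp.smul_apply,
            EuclideanSpace.single_apply, if_neg, smul_zero, add_zero]
          · exact ha2
          · intro hcontra
            have hv := congrArg Fin.val hcontra
            simp only [hi0] at hv
            omega
        have hdistc : dist c (a : EuclideanSpace ℝ (Fin n)) = δ / 2 := by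
          rw [hc, dist_eq_norm, add_sub_cancel_left, norm_smul,
            EuclideanSpace.norm_single, norm_one, mul_one, Real.norm_eq_abs,
            abs_of_pos (by linarith)]
        refine ⟨⟨c, hcL⟩, ?_, ?_⟩
        · rw [Metric.mem_ball, Subtype.dist_eq]
          simpa [hdistc] using by linarith
        · simp only [Set.mem_singleton_iff]
          intro hcontra
          have : c = (a : EuclideanSpace ℝ (Fin n)) := congrArg Subtype.val hcontra
          rw [← sub_eq_zero] at this
          rw [hc, add_sub_cancel_left] at this
          have hnorm := congrArg norm this
          rw [norm_smul, EuclideanSpace.norm_single, norm_one, mul_one, Real.norm_eq_abs,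
            abs_of_pos (by linarith : (0:ℝ) < δ / 2), norm_zero] at hnorm
          linarith
      obtain ⟨b, hbM, hbW⟩ := hMd.exists_mem_open hWopen hWne
      exact ⟨b, hbM, fun hc => hbW.2 (by simp [hc]), Metric.mem_ball.1 hbW.1⟩
    choose b hbM hbne hbdist using key
    -- the sequence in the half-space
    set u : ℕ → HalfSpace n := fun m => ⟨(b m : EuclideanSpace ℝ (Fin n)),
      le_of_eq ((b m).2 : lastCoord n (b m : EuclideanSpace ℝ (Fin n)) = 0).symm⟩ with hu
    have hbr : ∀ m, b m ∈ Metric.ball y0 r := by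
      intro m
      rw [Metric.mem_ball]
      calc dist (b m) y0 ≤ dist (b m) a + dist a y0 := dist_triangle _ _ _
        _ < ρ + dist a y0 := by linarith [lt_of_lt_of_le (hbdist m) (min_le_left _ _)]
        _ = r := by simp [hρ]
    have huK : ∀ m, u m ∈ K k0 := by
      intro m
      have := hball (hbr m)
      obtain ⟨z, hz, hz1⟩ := this
      have : u m = z := Subtype.ext hz1.symm
      rw [this]; exact hz
    haveI : Filter.NeBot (Filter.map u Filter.atTop) := Filter.map_neBot
    have hle : Filter.map u Filter.atTop ≤ Filter.principal (K k0) :=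
      Filter.le_principal_iff.2 (Filter.mem_map.2 (Filter.univ_mem' huK))
    obtain ⟨x, hxK, hx_cl⟩ := (hKc k0).exists_clusterPt hle
    have hfreq : ∀ U : Set (HalfSpace n), IsOpen U → x ∈ U →
        ∃ᶠ m in Filter.atTop, u m ∈ U := by
      intro U hU hxU
      exact mapClusterPt_iff_frequently.1 hx_cl U (hU.mem_nhds hxU)
    have hx2 : 0 ≤ lastCoord n x.1 := x.2
    rcases hx2.lt_or_eq with hxpos | hxzero
    · -- cluster point in the open half: impossible
      have hOpen : IsOpen (Subtype.val ⁻¹' {y | 0 < lastCoord n y} : Set (HalfSpace n)) :=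
        trace_isOpen_tau hpos M (isOpen_lt continuous_const (lastCoord_continuous hpos))
      obtain ⟨m, hm⟩ := (hfreq _ hOpen hxpos).exists
      have : lastCoord n (b m : EuclideanSpace ℝ (Fin n)) = 0 := (b m).2
      have h2 : (0:ℝ) < lastCoord n (b m : EuclideanSpace ℝ (Fin n)) := hm
      linarith
    · by_cases hxM : x.1 ∈ M
      · -- cluster point in M: its tangent ball meets L only at x
        have hOpen : IsOpen (Subtype.val ⁻¹' tangentBall n x.1 1 : Set (HalfSpace n)) :=
          isOpen_tau_of_mem (Or.inr ⟨x.1, ⟨hxzero.symm, fun hc => hc.2 hxM⟩, 1, one_pos, rfl⟩)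
        have hfr := hfreq _ hOpen (Or.inl rfl)
        have hfr' : ∀ m0 : ℕ, ∃ m, m0 ≤ m ∧ (b m : EuclideanSpace ℝ (Fin n)) = x.1 := by
          intro m0
          obtain ⟨m, hm1, hm2⟩ := Filter.frequently_atTop.1 hfr m0
          rcases hm2 with h | h
          · exact ⟨m, hm1, h⟩
          · exfalso
            have := lastCoord_pos_of_mem_ball hpos hxzero.symm h
            have h0 : lastCoord n (b m : EuclideanSpace ℝ (Fin n)) = 0 := (b m).2
            linarith
        have hax : dist (a : EuclideanSpace ℝ (Fin n)) x.1 = 0 := by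
          by_contra hc
          have hd0 : 0 < dist (a : EuclideanSpace ℝ (Fin n)) x.1 :=
            lt_of_le_of_ne dist_nonneg (Ne.symm hc)
          obtain ⟨m0, hm0⟩ := exists_nat_one_div_lt hd0
          obtain ⟨m, hm1, hm2⟩ := hfr' m0
          have h1 : dist (a : EuclideanSpace ℝ (Fin n)) x.1 = dist (b m) a := by
            rw [Subtype.dist_eq, hm2, dist_comm]
          have h2 : dist (b m) a < 1 / (m + 1 : ℝ) :=
            lt_of_lt_of_le (hbdist m) (min_le_right _ _)
          have h3 : (1 : ℝ) / (m + 1) ≤ 1 / (m0 + 1) := by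
            apply one_div_le_one_div_of_le (by positivity)
            exact_mod_cast by omega
          linarith
        obtain ⟨m, -, hm2⟩ := hfr' 0
        have : b m = a := by
          apply Subtype.ext
          rw [hm2, ← dist_eq_zero.1 hax]
        exact hbne m this
      · -- cluster point in L \ M: Euclidean neighborhoods force x = a ∈ M
        have hax : (a : EuclideanSpace ℝ (Fin n)) = x.1 := by
          rw [← dist_eq_zero]
          by_contra hc
          have hd0 : 0 < dist (a : EuclideanSpace ℝ (Fin n)) x.1 :=
            lt_of_le_of_ne dist_nonneg (Ne.symm hc)
          obtain ⟨m0, hm0⟩ := exists_nat_one_div_lt (half_pos hd0)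
          have hOpen : IsOpen (Subtype.val ⁻¹' Metric.ball x.1 (1 / (m0 + 1)) :
              Set (HalfSpace n)) := trace_isOpen_tau hpos M Metric.isOpen_ball
          have hxU : x ∈ (Subtype.val ⁻¹' Metric.ball x.1 (1 / (m0 + 1)) : Set (HalfSpace n)) :=
            Metric.mem_ball_self (by positivity)
          obtain ⟨m, hm1, hm2⟩ := Filter.frequently_atTop.1 (hfreq _ hOpen hxU) m0
          have h1 : dist (b m : EuclideanSpace ℝ (Fin n)) x.1 < 1 / (m0 + 1 : ℝ) :=
            Metric.mem_ball.1 hm2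
          have h2 : dist (a : EuclideanSpace ℝ (Fin n)) (b m : EuclideanSpace ℝ (Fin n))
              < 1 / (m + 1 : ℝ) := by
            rw [← Subtype.dist_eq, dist_comm]
            exact lt_of_lt_of_le (hbdist m) (min_le_right _ _)
          have h3 : (1 : ℝ) / (m + 1) ≤ 1 / (m0 + 1) := by
            apply one_div_le_one_div_of_le (by positivity)
            exact_mod_cast by omega
          have h4 := dist_triangle (a : EuclideanSpace ℝ (Fin n))
            (b m : EuclideanSpace ℝ (Fin n)) x.1
          linarith
        exact hxM (hax ▸ haM)
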